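/- Let λ, τ ∈ ℂ with sinh(λ/2) ≠ 0, cosh(λ/2) ≠ 0, cosh(τ/2) ≠ 0 and tanh(λ/2) ≠ 0, and set ι₁ = [[sinh(τ/2), cosh(τ/2)·coth(λ/2)], [−cosh(τ/2)·tanh(λ/2), −sinh(τ/2)]] and ι₂ = [[0, −1], [1, 0]]. Then ι₁² = −I, T(λ,τ) = ι₁·ι₂, and the fixed points of the Möbius transformation determined by ι₁ are exactly the two points (−sinh(τ/2) ± i)/(cosh(τ/2)·tanh(λ/2)). -/

import Mathlib

open Matrix

/-- `T(λ,τ) = [[cosh(τ/2)·coth(λ/2), −sinh(τ/2)], [−sinh(τ/2), cosh(τ/2)·tanh(λ/2)]]` -/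
noncomputable def Tmat (l τ : ℂ) : Matrix (Fin 2) (Fin 2) ℂ :=
  !![Complex.cosh (τ/2) * (Complex.cosh (l/2) / Complex.sinh (l/2)), -Complex.sinh (τ/2);
     -Complex.sinh (τ/2), Complex.cosh (τ/2) * (Complex.sinh (l/2) / Complex.cosh (l/2))]

/-- `ι₁ = [[sinh(τ/2), cosh(τ/2)·coth(λ/2)], [−cosh(τ/2)·tanh(λ/2), −sinh(τ/2)]]` -/
noncomputable def iota1 (l τ : ℂ) : Matrix (Fin 2) (Fin 2) ℂ :=
  !![Complex.sinh (τ/2), Complex.cosh (τ/2) * (Complex.cosh (l/2) / Complex.sinh (l/2));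
     -(Complex.cosh (τ/2) * (Complex.sinh (l/2) / Complex.cosh (l/2))), -Complex.sinh (τ/2)]

/-- `ι₂ = [[0, −1], [1, 0]]` -/
def iota2 : Matrix (Fin 2) (Fin 2) ℂ := !![0, -1; 1, 0]

theorem T_decomposition_into_half_turns (l τ : ℂ) (h1 : Complex.sinh (l/2) ≠ 0)
    (h2 : Complex.cosh (l/2) ≠ 0) (h3 : Complex.cosh (τ/2) ≠ 0)
    (h4 : Complex.sinh (l/2) / Complex.cosh (l/2) ≠ 0) :
    iota1 l τ * iota1 l τ = -1 ∧
    Tmat l τ = iota1 l τ * iota2 ∧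
    (∀ z : ℂ, iota1 l τ 1 0 * z ^ 2 + iota1 l τ 1 1 * z = iota1 l τ 0 0 * z + iota1 l τ 0 1 ↔
      (z = (-Complex.sinh (τ/2) + Complex.I) /
            (Complex.cosh (τ/2) * (Complex.sinh (l/2) / Complex.cosh (l/2))) ∨
       z = (-Complex.sinh (τ/2) - Complex.I) /
            (Complex.cosh (τ/2) * (Complex.sinh (l/2) / Complex.cosh (l/2))))) := by
  have key : Complex.cosh (τ/2)^2 - Complex.sinh (τ/2)^2 = 1 :=
    Complex.cosh_sq_sub_sinh_sq _
  have hca : Complex.cosh (τ/2) * (Complex.sinh (l/2) / Complex.cosh (l/2)) ≠ 0 :=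
    mul_ne_zero h3 h4
  refine ⟨?_, ?_, ?_⟩
  · ext i j
    have hx : (Complex.cosh (l/2)/Complex.sinh (l/2)) * (Complex.sinh (l/2)/Complex.cosh (l/2)) = 1 := by
      field_simp
    fin_cases i <;> fin_cases j <;>
      simp [iota1, Matrix.mul_apply, Fin.sum_univ_two] <;>
      first
      | ring1
      | linear_combination (-key) + (-(Complex.cosh (τ/2)^2)) * hx
  · ext i j
    fin_cases i <;> fin_cases j <;>
      simp [Tmat, iota1, iota2, Matrix.mul_apply, Fin.sum_univ_two]
  · intro z
    have e00 : iota1 l τ 0 0 = Complex.sinh (τ/2) := rfl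
    have e01 : iota1 l τ 0 1 = Complex.cosh (τ/2) * (Complex.cosh (l/2) / Complex.sinh (l/2)) := rfl
    have e10 : iota1 l τ 1 0 = -(Complex.cosh (τ/2) * (Complex.sinh (l/2) / Complex.cosh (l/2))) := rfl
    have e11 : iota1 l τ 1 1 = -Complex.sinh (τ/2) := rfl
    rw [e00, e01, e10, e11]
    have hfac : (-(Complex.cosh (τ/2) * (Complex.sinh (l/2) / Complex.cosh (l/2)))*z^2
          + (-Complex.sinh (τ/2))*z)
        - (Complex.sinh (τ/2)*z + Complex.cosh (τ/2) * (Complex.cosh (l/2) / Complex.sinh (l/2))) =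
        -(Complex.cosh (τ/2) * (Complex.sinh (l/2) / Complex.cosh (l/2))) *
          ((z - (-Complex.sinh (τ/2) + Complex.I) /
              (Complex.cosh (τ/2) * (Complex.sinh (l/2) / Complex.cosh (l/2)))) *
           (z - (-Complex.sinh (τ/2) - Complex.I) /
              (Complex.cosh (τ/2) * (Complex.sinh (l/2) / Complex.cosh (l/2))))) := by
      have hI : Complex.I^2 = -1 := Complex.I_sq
      field_simp
      linear_combination (-(Complex.cosh (l/2)^2)) * key
        + (-(Complex.cosh (l/2)^2)) * hI
    constructor
    · intro h
      have h0 : (z - (-Complex.sinh (τ/2) + Complex.I) /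
              (Complex.cosh (τ/2) * (Complex.sinh (l/2) / Complex.cosh (l/2)))) *
           (z - (-Complex.sinh (τ/2) - Complex.I) /
              (Complex.cosh (τ/2) * (Complex.sinh (l/2) / Complex.cosh (l/2)))) = 0 := by
        have := sub_eq_zero.mpr h
        rw [hfac] at this
        exact (mul_eq_zero.mp this).resolve_left (neg_ne_zero.mpr hca)
      rcases mul_eq_zero.mp h0 with h' | h'
      · exact Or.inl (sub_eq_zero.mp h')
      · exact Or.inr (sub_eq_zero.mp h')
    · intro h
      apply sub_eq_zero.mp
      rw [hfac]
      rcases h with h | h <;> rw [h] <;> ring
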